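/- arXiv:1812.07327 — 6 statements merged into one kernel-verified Lean document; each statement's English description precedes it below -/
import Mathlib

section
/- If G_k is obtained from k pairwise vertex-disjoint copies of a finite graph G by adding all edges between vertices in distinct copies, then ρ(G_k) = k·ρ(G), where ρ denotes the Hall ratio. -/
open scoped BigOperators

namespace Paper

variable {V : Type*}

/-- `s` is an independent set in the graph `G`. -/
def IsIndepSet (G : SimpleGraph V) (s : Set V) : Prop :=
  ∀ ⦃u⦄, u ∈ s → ∀ ⦃v⦄, v ∈ s → ¬ G.Adj u v

/-- `α_w(G)`: the maximum total weight of an independent set of `G`. -/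
noncomputable def alphaW (G : SimpleGraph V) [Fintype V] (w : V → ℝ) : ℝ :=
  sSup {x : ℝ | ∃ s : Finset V, IsIndepSet G ↑s ∧ x = ∑ v ∈ s, w v}

/-- A weight assignment: nonnegative and not identically zero. -/
def IsWeight [Fintype V] (w : V → ℝ) : Prop :=
  (∀ v, 0 ≤ w v) ∧ ∃ v, w v ≠ 0

/-- The fractional chromatic number, as the supremum of `w(V)/α_w(G)`
over all weight assignments `w`. -/
noncomputable def fracChrom (G : SimpleGraph V) [Fintype V] : ℝ :=
  sSup {x : ℝ | ∃ w : V → ℝ, IsWeight w ∧ x = (∑ v, w v) / alphaW G w}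

/-- The independence number of `G`. -/
noncomputable def indepNum (G : SimpleGraph V) [Fintype V] : ℕ :=
  sSup {n : ℕ | ∃ s : Finset V, IsIndepSet G ↑s ∧ s.card = n}

/-- The independence number of a subgraph `H` of `G`. -/
noncomputable def subIndepNum (G : SimpleGraph V) [Fintype V] (H : G.Subgraph) : ℕ :=
  sSup {n : ℕ | ∃ s : Finset V, ↑s ⊆ H.verts ∧
    (∀ ⦃u⦄, u ∈ s → ∀ ⦃v⦄, v ∈ s → ¬ H.Adj u v) ∧ s.card = n}

/-- The Hall ratio: the supremum of `|V(H)|/α(H)` over all nonempty subgraphs `H` of `G`. -/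
noncomputable def hallRatio (G : SimpleGraph V) [Fintype V] : ℝ :=
  sSup {x : ℝ | ∃ H : G.Subgraph, H.verts.Nonempty ∧
    x = (H.verts.ncard : ℝ) / (subIndepNum G H : ℝ)}

/-- The average degree `2|E(G)|/|V(G)|` of a finite graph. -/
noncomputable def avgDeg (G : SimpleGraph V) [Fintype V] : ℝ :=
  2 * (G.edgeSet.ncard : ℝ) / (Fintype.card V : ℝ)

/-- The 1-subdivision of `F` is isomorphic to a subgraph of `G`:
there are injective maps sending vertices of `F` (branch vertices) and edges of `F`
(subdivision vertices) to distinct vertices of `G`, each subdivision vertex being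
adjacent in `G` to the images of the two endpoints of its edge. -/
def ContainsSubdiv {W : Type*} (G : SimpleGraph V) (F : SimpleGraph W) : Prop :=
  ∃ (b : W → V) (s : F.edgeSet → V),
    Function.Injective b ∧ Function.Injective s ∧
    (∀ (e : F.edgeSet) (w : W), b w ≠ s e) ∧
    ∀ (e : F.edgeSet) (w : W), w ∈ (e : Sym2 W) → G.Adj (s e) (b w)

/-- The join of `k` disjoint copies of `G`: `(u,i)` adjacent to `(v,j)` iff
`i ≠ j`, or `i = j` and `uv ∈ E(G)`. -/
def joinCopies (G : SimpleGraph V) (k : ℕ) : SimpleGraph (V × Fin k) where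
  Adj x y := x.2 ≠ y.2 ∨ (x.2 = y.2 ∧ G.Adj x.1 y.1)
  symm := by
    constructor
    rintro ⟨u, i⟩ ⟨v, j⟩ (h | ⟨h, hadj⟩)
    · exact Or.inl (Ne.symm h)
    · exact Or.inr ⟨h.symm, hadj.symm⟩
  loopless := by
    constructor
    rintro ⟨u, i⟩ (h | ⟨-, hadj⟩)
    · exact h rfl
    · exact G.ne_of_adj hadj rfl

set_option linter.unusedSectionVars false

section Aux
variable (G : SimpleGraph V) [Fintype V] (H : G.Subgraph)

lemma sub_bddAbove :
    BddAbove {n : ℕ | ∃ s : Finset V, ↑s ⊆ H.verts ∧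
    (∀ ⦃u⦄, u ∈ s → ∀ ⦃v⦄, v ∈ s → ¬ H.Adj u v) ∧ s.card = n} := by
  refine ⟨Fintype.card V, ?_⟩
  rintro n ⟨s, -, -, rfl⟩
  exact s.card_le_univ.trans_eq Finset.card_univ

lemma sub_zero_mem :
    (0:ℕ) ∈ {n : ℕ | ∃ s : Finset V, ↑s ⊆ H.verts ∧
    (∀ ⦃u⦄, u ∈ s → ∀ ⦃v⦄, v ∈ s → ¬ H.Adj u v) ∧ s.card = n} :=
  ⟨∅, by simp, by simp, rfl⟩

lemma sub_exists_attain :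
    ∃ s : Finset V, ↑s ⊆ H.verts ∧
      (∀ ⦃u⦄, u ∈ s → ∀ ⦃v⦄, v ∈ s → ¬ H.Adj u v) ∧ s.card = subIndepNum G H :=
  Nat.sSup_mem ⟨0, sub_zero_mem G H⟩ (sub_bddAbove G H)

lemma le_subIndepNum (s : Finset V)
    (h1 : ↑s ⊆ H.verts) (h2 : ∀ ⦃u⦄, u ∈ s → ∀ ⦃v⦄, v ∈ s → ¬ H.Adj u v) :
    s.card ≤ subIndepNum G H :=
  le_csSup (sub_bddAbove G H) ⟨s, h1, h2, rfl⟩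

lemma one_le_subIndepNum (h : H.verts.Nonempty) : 1 ≤ subIndepNum G H := by
  obtain ⟨v, hv⟩ := h
  have h2 : ∀ ⦃u⦄, u ∈ ({v} : Finset V) → ∀ ⦃w⦄, w ∈ ({v} : Finset V) → ¬ H.Adj u w := by
    intro u hu w hw hadj
    simp only [Finset.mem_singleton] at hu hw
    subst hu; subst hw
    exact (G.loopless.irrefl _) (H.adj_sub hadj)
  simpa using le_subIndepNum G H {v} (by simpa using hv) h2

lemma hall_set_nonempty [Nonempty V] :
    {x : ℝ | ∃ H : G.Subgraph, H.verts.Nonempty ∧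
      x = (H.verts.ncard : ℝ) / (subIndepNum G H : ℝ)}.Nonempty :=
  ⟨_, ⟨⊤, by simp [Set.univ_nonempty], rfl⟩⟩

lemma hall_set_bddAbove :
    BddAbove {x : ℝ | ∃ H : G.Subgraph, H.verts.Nonempty ∧
      x = (H.verts.ncard : ℝ) / (subIndepNum G H : ℝ)} := by
  refine ⟨Fintype.card V, ?_⟩
  rintro x ⟨H, hne, rfl⟩
  have h1 : (1:ℝ) ≤ (subIndepNum G H : ℝ) := by
    exact_mod_cast one_le_subIndepNum G H hne
  calc (H.verts.ncard : ℝ) / (subIndepNum G H : ℝ) ≤ (H.verts.ncard : ℝ) :=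
        div_le_self (by positivity) h1
    _ ≤ Fintype.card V := by
        have h := Set.ncard_le_ncard (Set.subset_univ H.verts) Set.finite_univ
        rw [Set.ncard_univ, Nat.card_eq_fintype_card] at h
        exact_mod_cast h

lemma ratio_le_hallRatio (hne : H.verts.Nonempty) :
    (H.verts.ncard : ℝ) / (subIndepNum G H : ℝ) ≤ hallRatio G :=
  le_csSup (hall_set_bddAbove G) ⟨H, hne, rfl⟩

lemma hallRatio_nonneg [Nonempty V] : 0 ≤ hallRatio G := by
  refine le_trans ?_ (ratio_le_hallRatio G ⊤ (by simp [Set.univ_nonempty]))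
  positivity

lemma ncard_le_hall_mul [Nonempty V] : (H.verts.ncard : ℝ) ≤ hallRatio G * (subIndepNum G H : ℝ) := by
  by_cases hne : H.verts.Nonempty
  · have h1 : (0:ℝ) < (subIndepNum G H : ℝ) := by
      exact_mod_cast one_le_subIndepNum G H hne
    have := ratio_le_hallRatio G H hne
    rw [div_le_iff₀ h1] at this
    exact this
  · rw [Set.not_nonempty_iff_eq_empty] at hne
    simp only [hne, Set.ncard_empty, Nat.cast_zero]
    exact mul_nonneg (hallRatio_nonneg G) (by positivity)

end Aux

section Main
variable [Fintype V] [Nonempty V] (G : SimpleGraph V) (k : ℕ) (hk : 1 ≤ k)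

lemma upper (H : (joinCopies G k).Subgraph) (hne : H.verts.Nonempty) :
    (H.verts.ncard : ℝ) / (subIndepNum (joinCopies G k) H : ℝ) ≤ k * hallRatio G := by
  classical
  set a := subIndepNum (joinCopies G k) H with ha_def
  have ha : (1:ℝ) ≤ (a:ℝ) := by exact_mod_cast one_le_subIndepNum _ H hne
  set T : Finset (V × Fin k) := (Set.toFinite H.verts).toFinset with hT_def
  have hTmem : ∀ p, p ∈ T ↔ p ∈ H.verts := fun p => Set.Finite.mem_toFinset _
  have hncard : H.verts.ncard = T.card := Set.ncard_eq_toFinset_card _ _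
  have hsum : T.card = ∑ i : Fin k, (T.filter (fun p => p.2 = i)).card :=
    Finset.card_eq_sum_card_fiberwise (fun x _ => Finset.mem_univ x.2)
  -- per-fiber bound
  have hfiber : ∀ i : Fin k,
      ((T.filter (fun p => p.2 = i)).card : ℝ) ≤ hallRatio G * (a:ℝ) := by
    intro i
    set Fi : Finset V := (T.filter (fun p => p.2 = i)).image Prod.fst with hFi_def
    have hcardFi : Fi.card = (T.filter (fun p => p.2 = i)).card := by
      apply Finset.card_image_of_injOn
      intro p hp q hq hpq
      have hpi : p.2 = i := (Finset.mem_filter.mp hp).2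
      have hqi : q.2 = i := (Finset.mem_filter.mp hq).2
      exact Prod.ext hpq (hpi.trans hqi.symm)
    have hFimem : ∀ u, u ∈ Fi → (u, i) ∈ H.verts := by
      intro u hu
      obtain ⟨p, hp, hpu⟩ := Finset.mem_image.mp hu
      obtain ⟨hpT, hpi⟩ := Finset.mem_filter.mp hp
      have hpe : p = (u, i) := Prod.ext hpu hpi
      rw [← hpe]
      exact (hTmem p).mp hpT
    set Hi : G.Subgraph :=
      { verts := ↑Fi
        Adj := fun u v => u ∈ Fi ∧ v ∈ Fi ∧ G.Adj u v
        adj_sub := fun h => h.2.2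
        edge_vert := fun h => h.1
        symm := ⟨fun u v h => ⟨h.2.1, h.1, h.2.2.symm⟩⟩ } with hHi_def
    have hHiverts : Hi.verts.ncard = Fi.card := Set.ncard_coe_finset Fi
    have hsub : (subIndepNum G Hi : ℝ) ≤ (a:ℝ) := by
      obtain ⟨s, hs1, hs2, hs3⟩ := sub_exists_attain G Hi
      have := le_subIndepNum (joinCopies G k) H (s.image (fun v => (v, i))) ?_ ?_
      · rw [Finset.card_image_of_injective _ (fun u v h => (Prod.ext_iff.mp h).1)] at this
        rw [hs3] at this
        exact_mod_cast this
      · intro p hp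
        obtain ⟨u, hu, rfl⟩ := Finset.mem_image.mp hp
        exact hFimem u (hs1 hu)
      · intro p hp q hq hadj
        obtain ⟨u, hu, rfl⟩ := Finset.mem_image.mp hp
        obtain ⟨v, hv, rfl⟩ := Finset.mem_image.mp hq
        have hadj' := H.adj_sub hadj
        rcases hadj' with h | ⟨-, h⟩
        · exact h rfl
        · exact hs2 hu hv ⟨hs1 hu, hs1 hv, h⟩
    calc ((T.filter (fun p => p.2 = i)).card : ℝ) = (Fi.card : ℝ) := by
          exact_mod_cast hcardFi.symm
      _ = (Hi.verts.ncard : ℝ) := by rw [hHiverts]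
      _ ≤ hallRatio G * (subIndepNum G Hi : ℝ) := ncard_le_hall_mul G Hi
      _ ≤ hallRatio G * (a:ℝ) := by
          exact mul_le_mul_of_nonneg_left hsub (hallRatio_nonneg G)
  have htot : (H.verts.ncard : ℝ) ≤ k * (hallRatio G * (a:ℝ)) := by
    rw [hncard, hsum]
    push_cast
    calc (∑ i : Fin k, ((T.filter (fun p => p.2 = i)).card : ℝ))
        ≤ ∑ _i : Fin k, hallRatio G * (a:ℝ) := Finset.sum_le_sum (fun i _ => hfiber i)
      _ = k * (hallRatio G * (a:ℝ)) := by simp [Finset.sum_const, mul_comm]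
  rw [div_le_iff₀ (by linarith)]
  linarith [htot]


lemma ncard_prod_univ' {W : Type*} [Fintype W] (s : Set V) :
    (s ×ˢ (Set.univ : Set W)).ncard = s.ncard * Fintype.card W := by
  rw [← Nat.card_coe_set_eq, ← Nat.card_coe_set_eq,
    Nat.card_congr (Equiv.Set.prod _ _), Nat.card_prod]
  congr 1
  rw [Nat.card_congr (Equiv.Set.univ W), Nat.card_eq_fintype_card]

include hk in
lemma lower (H : G.Subgraph) (hne : H.verts.Nonempty) :
    (k:ℝ) * ((H.verts.ncard : ℝ) / (subIndepNum G H : ℝ)) ≤ hallRatio (joinCopies G k) := by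
  classical
  set H' : (joinCopies G k).Subgraph :=
    { verts := H.verts ×ˢ (Set.univ : Set (Fin k))
      Adj := fun p q => p.1 ∈ H.verts ∧ q.1 ∈ H.verts ∧ (p.2 ≠ q.2 ∨ H.Adj p.1 q.1)
      adj_sub := by
        rintro p q ⟨-, -, h | h⟩
        · exact Or.inl h
        · by_cases hpq : p.2 = q.2
          · exact Or.inr ⟨hpq, H.adj_sub h⟩
          · exact Or.inl hpq
      edge_vert := fun h => ⟨h.1, Set.mem_univ _⟩
      symm := by
        constructor
        rintro p q ⟨h1, h2, h3 | h3⟩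
        · exact ⟨h2, h1, Or.inl (Ne.symm h3)⟩
        · exact ⟨h2, h1, Or.inr h3.symm⟩ } with hH'_def
  have hverts : H'.verts.ncard = H.verts.ncard * k := by
    rw [hH'_def]
    simpa using ncard_prod_univ' (W := Fin k) H.verts
  have hne' : H'.verts.Nonempty := by
    obtain ⟨v, hv⟩ := hne
    exact ⟨(v, ⟨0, hk⟩), hv, Set.mem_univ _⟩
  have hαeq : subIndepNum (joinCopies G k) H' = subIndepNum G H := by
    apply le_antisymm
    · obtain ⟨s', hs1, hs2, hs3⟩ := sub_exists_attain (joinCopies G k) H'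
      rw [← hs3]
      have hconst : ∀ p ∈ s', ∀ q ∈ s', p.2 = q.2 := by
        intro p hp q hq
        by_contra hpq
        exact hs2 hp hq ⟨(hs1 hp).1, (hs1 hq).1, Or.inl hpq⟩ 
      have hinj : Set.InjOn Prod.fst (↑s' : Set (V × Fin k)) := by
        intro p hp q hq hpq
        exact Prod.ext hpq (hconst p (Finset.mem_coe.mp hp) q (Finset.mem_coe.mp hq))
      rw [← Finset.card_image_of_injOn hinj]
      apply le_subIndepNum
      · intro u hu
        obtain ⟨p, hp, rfl⟩ := Finset.mem_image.mp hu
        exact (hs1 hp).1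
      · intro u hu v hv hadj
        obtain ⟨p, hp, rfl⟩ := Finset.mem_image.mp hu
        obtain ⟨q, hq, rfl⟩ := Finset.mem_image.mp hv
        exact hs2 hp hq ⟨(hs1 hp).1, (hs1 hq).1, Or.inr hadj⟩
    · obtain ⟨s, hs1, hs2, hs3⟩ := sub_exists_attain G H
      rw [← hs3]
      have : (s.image (fun v => (v, (⟨0, hk⟩ : Fin k)))).card = s.card :=
        Finset.card_image_of_injective _ (fun u v h => (Prod.ext_iff.mp h).1)
      rw [← this]
      apply le_subIndepNum
      · intro p hp
        obtain ⟨u, hu, rfl⟩ := Finset.mem_image.mp hp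
        exact ⟨hs1 hu, Set.mem_univ _⟩
      · rintro p hp q hq ⟨-, -, h | h⟩
        · obtain ⟨u, hu, rfl⟩ := Finset.mem_image.mp hp
          obtain ⟨v, hv, rfl⟩ := Finset.mem_image.mp hq
          exact h rfl
        · obtain ⟨u, hu, rfl⟩ := Finset.mem_image.mp hp
          obtain ⟨v, hv, rfl⟩ := Finset.mem_image.mp hq
          exact hs2 hu hv h
  have := ratio_le_hallRatio (joinCopies G k) H' hne'
  rw [hαeq, hverts] at this
  refine le_trans (le_of_eq ?_) this
  push_cast
  ring

include hk in
theorem statement4' :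
    hallRatio (joinCopies G k) = k * hallRatio G := by
  haveI : NeZero k := ⟨by omega⟩
  haveI : Nonempty (V × Fin k) := by
    obtain ⟨v⟩ := ‹Nonempty V›
    exact ⟨(v, ⟨0, hk⟩)⟩
  have kpos : (0:ℝ) < k := by exact_mod_cast hk
  apply le_antisymm
  · apply csSup_le (hall_set_nonempty (joinCopies G k))
    rintro x ⟨H, hne, rfl⟩
    exact upper G k H hne
  · rw [← le_div_iff₀' kpos]
    apply csSup_le (hall_set_nonempty G)
    rintro x ⟨H, hne, rfl⟩
    rw [le_div_iff₀' kpos]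
    exact lower G k hk H hne

end Main

/-- `ρ(G_k) = k·ρ(G)` where `G_k` is the join of `k` disjoint copies of `G`. -/
theorem statement4 {V : Type*} [Fintype V] [Nonempty V] (G : SimpleGraph V)
    (k : ℕ) (hk : 1 ≤ k) :
    hallRatio (joinCopies G k) = k * hallRatio G :=
  statement4' G k hk

end Paper
end

section
/- Let a ≥ 2 and q ≥ 1 be integers, and let H be a bipartite graph with bipartition (A, B) where every vertex of A has degree exactly a and |A| = q·|B|, with B nonempty. Then there exists a graph F on vertex set B, all of whose edges join pairs of vertices having a common neighbor in A (with distinct vertices of A accounting for distinct edges), such that every independent set Z of F satisfies deg_H(Z) < (√q·a + q)·|B|. -/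
open scoped BigOperators

set_option maxHeartbeats 1000000

namespace Paper

variable {V : Type*}

lemma key_count {ι : Type*} [Fintype ι] (a q m : ℕ) (ha : 2 ≤ a) (hq : 1 ≤ q) (hm : 1 ≤ m)
    (hι : Fintype.card ι = q * m) (d : ι → ℝ) (hd0 : ∀ i, 0 ≤ d i) (hda : ∀ i, d i ≤ a)
    (hD : (Real.sqrt q * a + q) * m ≤ ∑ i, d i) :
    (∏ i, ((a : ℝ) * (a - 1) - d i * (d i - 1))) * 2 ^ m < ((a : ℝ) * (a - 1)) ^ (q * m) := by
  have haR : (2:ℝ) ≤ a := by exact_mod_cast ha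
  have hqR : (1:ℝ) ≤ q := by exact_mod_cast hq
  have hmR : (1:ℝ) ≤ m := by exact_mod_cast hm
  set c : ℝ := (a:ℝ) * (a - 1) with hc
  have hcpos : 0 < c := by nlinarith
  set s : ℝ := Real.sqrt q with hs
  have hs2 : s * s = q := Real.mul_self_sqrt (by positivity)
  have hs1 : (1:ℝ) ≤ s := by
    rw [hs, show (1:ℝ) = Real.sqrt 1 by simp]
    exact Real.sqrt_le_sqrt hqR
  set D : ℝ := ∑ i, d i with hDdef
  have hcs : D ^ 2 ≤ (q * m : ℝ) * ∑ i, d i ^ 2 := by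
    have := sq_sum_le_card_mul_sum_sq (s := (Finset.univ : Finset ι)) (f := d)
    simpa [← hDdef, Finset.card_univ, hι] using this
  have hsam : (0:ℝ) ≤ s * ↑a * ↑m := by positivity
  have hD0n : (q:ℝ) * m ≤ (s * a + q) * m := by nlinarith
  -- step 1 : sum of d(d-1) is large
  have h1 : ((a:ℝ)^2 + a) * m ≤ ∑ i, d i * (d i - 1) := by
    have hsum : ∑ i, d i * (d i - 1) = (∑ i, d i ^ 2) - D := by
      rw [hDdef, ← Finset.sum_sub_distrib]
      congr 1; ext i; ring
    rw [hsum]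
    have hqm : (0:ℝ) < q * m := by positivity
    have hDlb : (s * a + q) * m ≤ D := hD
    have hD0 : ((s*a+q)*m)^2 - ((s*a+q)*m)*(q*m) = q*m^2*((a:ℝ)^2 + s*a) := by
      linear_combination ((m:ℝ)^2 * (a:ℝ)^2) * hs2
    have hint : (0:ℝ) ≤ (D - (s*a+q)*m) * (D + (s*a+q)*m - q*m) :=
      mul_nonneg (sub_nonneg.2 hDlb) (by linarith)
    have step : ((s*a+q)*m)^2 - ((s*a+q)*m)*(q*m) ≤ D^2 - D*(q*m) := by nlinarith [hint]
    have hslack : (0:ℝ) ≤ (q:ℝ)*m^2 * ((a:ℝ)*(s-1)) := by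
      apply mul_nonneg (by positivity)
      apply mul_nonneg (by linarith) (by linarith)
    have hfinal : (q*m:ℝ) * (((a:ℝ)^2+a)*m) ≤ (q*m) * ((∑ i, d i ^ 2) - D) := by
      nlinarith [hcs, step, hD0, hslack]
    exact le_of_mul_le_mul_left hfinal hqm
  -- rewrite product
  set p : ι → ℝ := fun i => d i * (d i - 1) / c with hp
  have hfac : ∀ i, (a:ℝ) * (a - 1) - d i * (d i - 1) = c * (1 - p i) := by
    intro i; rw [hp]; field_simp; rw [hc]
  have hprod : (∏ i, ((a : ℝ) * (a - 1) - d i * (d i - 1))) = c ^ (q * m) * ∏ i, (1 - p i) := by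
    rw [Finset.prod_congr rfl (fun i _ => hfac i), Finset.prod_mul_distrib, Finset.prod_const,
      Finset.card_univ, hι]
  have hple : ∀ i, 0 ≤ 1 - p i := by
    intro i
    rw [hp, sub_nonneg, div_le_one hcpos, hc]
    nlinarith [hd0 i, hda i]
  -- product ≤ exp(-∑ p)
  have h2 : (∏ i, (1 - p i)) ≤ Real.exp (-∑ i, p i) := by
    calc (∏ i, (1 - p i)) ≤ ∏ i, Real.exp (-p i) :=
          Finset.prod_le_prod (fun i _ => hple i)
            (fun i _ => by linarith [Real.add_one_le_exp (-p i)])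
      _ = Real.exp (∑ i, -p i) := (Real.exp_sum _ _).symm
      _ = Real.exp (-∑ i, p i) := by rw [Finset.sum_neg_distrib]
  -- ∑ p ≥ m
  have h3 : (m:ℝ) ≤ ∑ i, p i := by
    have : ∑ i, p i = (∑ i, d i * (d i - 1)) / c := by
      rw [hp, ← Finset.sum_div]
    rw [this, le_div_iff₀ hcpos]
    nlinarith [h1, mul_nonneg (by linarith : (0:ℝ) ≤ (a:ℝ)) (by linarith : (0:ℝ) ≤ (m:ℝ))]
  -- exp(-m) * 2^m < 1
  have h4 : Real.exp (-∑ i, p i) * 2 ^ m < 1 := by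
    have e1 : Real.exp (-∑ i, p i) ≤ Real.exp (-(m:ℝ)) := by
      apply Real.exp_le_exp.2; linarith
    have e2 : (2:ℝ) ^ m < Real.exp m := by
      rw [← Real.exp_one_pow]
      exact pow_lt_pow_left₀ (by linarith [Real.exp_one_gt_d9]) (by norm_num) (by omega)
    have e3 : Real.exp (-(m:ℝ)) * 2 ^ m < 1 := by
      rw [Real.exp_neg]
      rw [inv_mul_lt_iff₀ (Real.exp_pos _), mul_one]
      exact e2
    calc Real.exp (-∑ i, p i) * 2 ^ m ≤ Real.exp (-(m:ℝ)) * 2 ^ m := by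
          exact mul_le_mul_of_nonneg_right e1 (by positivity)
      _ < 1 := e3
  -- assemble
  rw [hprod]
  calc c ^ (q*m) * (∏ i, (1 - p i)) * 2 ^ m ≤ c ^ (q*m) * (Real.exp (-∑ i, p i) * 2 ^ m) := by
        rw [mul_assoc]
        exact mul_le_mul_of_nonneg_left (mul_le_mul_of_nonneg_right h2 (by positivity)) (by positivity)
    _ < c ^ (q*m) * 1 := by
        exact mul_lt_mul_of_pos_left h4 (by positivity)
    _ = c ^ (q*m) := mul_one _


/-- with `H` bipartite with parts `(A,B)`, each vertex of `A` of degree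
exactly `a` and `|A| = q|B|`, `B` nonempty, there is a choice, for each `v ∈ A`, of a
pair of distinct neighbors of `v` (an edge of a graph `F` on `B`) such that every set
`Z ⊆ B` independent with respect to these edges satisfies `deg_H(Z) < (√q·a + q)|B|`. -/
theorem statement10 {V : Type*} [Fintype V] (H : SimpleGraph V) (a q : ℕ)
    (ha : 2 ≤ a) (hq : 1 ≤ q) (A B : Finset V)
    (hpart : (↑A ∪ ↑B : Set V) = Set.univ) (hdisj : Disjoint A B)
    (hbip : ∀ u v, H.Adj u v → (u ∈ A ∧ v ∈ B) ∨ (u ∈ B ∧ v ∈ A))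
    (hdegA : ∀ v ∈ A, (H.neighborSet v).ncard = a)
    (hcard : A.card = q * B.card) (hB : B.Nonempty) :
    ∃ f : (v : A) → Sym2 V,
      (∀ v : A, ¬ (f v).IsDiag ∧ ∀ u ∈ f v, H.Adj (v : V) u) ∧
      ∀ Z : Finset V, Z ⊆ B → (∀ v : A, ¬ ∀ u ∈ f v, u ∈ Z) →
        ∑ v ∈ Z, ((H.neighborSet v).ncard : ℝ) < (Real.sqrt q * a + q) * B.card := by
  classical
  have hm : 1 ≤ B.card := hB.card_pos
  have hnc : ∀ v : V, (H.neighborSet v).ncard = (H.neighborFinset v).card := by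
    intro v
    rw [Set.ncard_eq_toFinset_card']
    congr 1
  have hnbA : ∀ v ∈ A, (H.neighborFinset v).card = a := fun v hv => by
    rw [← hnc]; exact hdegA v hv
  have hnotAB : ∀ v ∈ B, v ∉ A := fun v hv => Finset.disjoint_right.1 hdisj hv
  have hnbB : ∀ z ∈ B, ∀ u ∈ H.neighborFinset z, u ∈ A := by
    intro z hz u hu
    rw [SimpleGraph.mem_neighborFinset] at hu
    rcases hbip z u hu with ⟨h1, _⟩ | ⟨_, h2⟩
    · exact absurd h1 (hnotAB z hz)
    · exact h2
  -- double counting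
  have hdc : ∀ Z : Finset V, Z ⊆ B →
      ∑ z ∈ Z, (H.neighborFinset z).card = ∑ v ∈ A, (H.neighborFinset v ∩ Z).card := by
    intro Z hZ
    calc ∑ z ∈ Z, (H.neighborFinset z).card
        = ∑ z ∈ Z, (A.filter (fun v => z ∈ H.neighborFinset v)).card := by
          apply Finset.sum_congr rfl
          intro z hz
          congr 1
          ext u
          simp only [Finset.mem_filter, SimpleGraph.mem_neighborFinset]
          constructor
          · intro h
            exact ⟨hnbB z (hZ hz) u ((SimpleGraph.mem_neighborFinset _ _ _).2 h), h.symm⟩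
          · rintro ⟨-, h⟩
            exact h.symm
      _ = ∑ z ∈ Z, ∑ v ∈ A, if z ∈ H.neighborFinset v then 1 else 0 := by
          simp only [Finset.card_filter]
      _ = ∑ v ∈ A, ∑ z ∈ Z, if z ∈ H.neighborFinset v then 1 else 0 := Finset.sum_comm
      _ = ∑ v ∈ A, (H.neighborFinset v ∩ Z).card := by
          apply Finset.sum_congr rfl
          intro v hv
          rw [← Finset.card_filter]
          congr 1
          rw [Finset.filter_mem_eq_inter, Finset.inter_comm]
  -- the spaces of choices
  set S : ↥A → Finset (V × V) := fun v => (H.neighborFinset (v : V)).offDiag with hS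
  have hScard : ∀ v : ↥A, (S v).card = a * a - a := by
    intro v
    rw [hS]
    rw [Finset.offDiag_card, hnbA (v : V) v.2]
  have haa : a ≤ a * a := Nat.le_mul_of_pos_left a (by omega)
  have hAcard : Fintype.card ↥A = q * B.card := by rw [Fintype.card_coe, hcard]
  have hΩcard : (Fintype.piFinset S).card = (a * a - a) ^ (q * B.card) := by
    rw [Fintype.card_piFinset]
    rw [Finset.prod_congr rfl (fun v _ => hScard v), Finset.prod_const, Finset.card_univ, hAcard]
  have haapos : 0 < a * a - a := by
    have : a < a * a := by nlinarith
    omega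
  have hΩpos : 0 < (Fintype.piFinset S).card := by
    rw [hΩcard]; exact Nat.pow_pos haapos
  set T : Finset V → ↥A → Finset (V × V) :=
    fun Z v => (S v).filter (fun p => ¬(p.1 ∈ Z ∧ p.2 ∈ Z)) with hT
  set 𝒵 : Finset (Finset V) := B.powerset.filter
    (fun Z => (Real.sqrt q * a + q) * B.card ≤ ∑ z ∈ Z, ((H.neighborFinset z).card : ℝ)) with h𝒵
  -- key counting estimate
  have hkey : ∀ Z ∈ 𝒵,
      ((Fintype.piFinset (T Z)).card : ℝ) * 2 ^ B.card < ((Fintype.piFinset S).card : ℝ) := by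
    intro Z hZ
    rw [h𝒵, Finset.mem_filter, Finset.mem_powerset] at hZ
    obtain ⟨hZB, hZdeg⟩ := hZ
    set d : ↥A → ℕ := fun v => (H.neighborFinset (v : V) ∩ Z).card with hd
    have hda : ∀ v : ↥A, d v ≤ a := by
      intro v
      rw [hd]
      exact le_trans (Finset.card_le_card Finset.inter_subset_left) (le_of_eq (hnbA _ v.2))
    have hdd : ∀ n : ℕ, n ≤ n * n := by
      intro n
      cases n with
      | zero => simp
      | succ k => exact Nat.le_mul_of_pos_left _ (Nat.succ_pos k)
    have hTcard : ∀ v : ↥A,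
        ((T Z v).card : ℝ) = (a : ℝ) * ((a : ℝ) - 1) - (d v : ℝ) * ((d v : ℝ) - 1) := by
      intro v
      have hfe : (S v).filter (fun p => (p.1 ∈ Z ∧ p.2 ∈ Z))
          = (H.neighborFinset (v : V) ∩ Z).offDiag := by
        ext p
        simp only [hS, Finset.mem_filter, Finset.mem_offDiag, Finset.mem_inter]
        tauto
      have hsplit := Finset.card_filter_add_card_filter_not
        (s := S v) (p := fun p => (p.1 ∈ Z ∧ p.2 ∈ Z))
      rw [hfe, Finset.offDiag_card, hScard v] at hsplit
      -- hsplit : (d v * d v - d v) + (T Z v).card = a * a - a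
      have h1 : (d v * d v - d v) + (T Z v).card = a * a - a := by
        rw [hT]
        exact hsplit
      have := congrArg (fun n : ℕ => (n : ℝ)) h1
      push_cast [Nat.cast_sub (hdd (d v)), Nat.cast_sub haa] at this
      push_cast
      nlinarith [this]
    have hDsum : (Real.sqrt q * a + q) * B.card ≤ ∑ v : ↥A, ((d v : ℕ) : ℝ) := by
      have e1 : ∑ v : ↥A, ((d v : ℕ) : ℝ)
          = ∑ v ∈ A, ((H.neighborFinset v ∩ Z).card : ℝ) := by
        rw [hd]
        exact Finset.sum_coe_sort A (fun v => ((H.neighborFinset v ∩ Z).card : ℝ))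
      have e2 := hdc Z hZB
      have e3 : ∑ z ∈ Z, ((H.neighborFinset z).card : ℝ)
          = ∑ v ∈ A, ((H.neighborFinset v ∩ Z).card : ℝ) := by
        exact_mod_cast congrArg (fun n : ℕ => (n : ℝ)) e2
      rw [e1, ← e3]
      exact hZdeg
    have := key_count a q B.card ha hq hm hAcard (fun v => (d v : ℝ))
      (fun v => by positivity) (fun v => Nat.cast_le.2 (hda v)) hDsum
    calc ((Fintype.piFinset (T Z)).card : ℝ) * 2 ^ B.card
        = (∏ v : ↥A, ((a : ℝ) * ((a : ℝ) - 1) - (d v : ℝ) * ((d v : ℝ) - 1))) * 2 ^ B.card := by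
          rw [Fintype.card_piFinset]
          push_cast
          rw [Finset.prod_congr rfl (fun v _ => hTcard v)]
      _ < ((a : ℝ) * ((a : ℝ) - 1)) ^ (q * B.card) := this
      _ = ((Fintype.piFinset S).card : ℝ) := by
          rw [hΩcard]
          push_cast [Nat.cast_sub haa]
          ring
  -- union bound
  have hex : ¬ ∀ g ∈ Fintype.piFinset S, ∃ Z ∈ 𝒵, g ∈ Fintype.piFinset (T Z) := by
    intro hall
    have hsub : Fintype.piFinset S ⊆ 𝒵.biUnion (fun Z => Fintype.piFinset (T Z)) := by
      intro g hg
      rw [Finset.mem_biUnion]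
      exact hall g hg
    have h1 : ((Fintype.piFinset S).card : ℝ)
        ≤ ∑ Z ∈ 𝒵, ((Fintype.piFinset (T Z)).card : ℝ) := by
      exact_mod_cast le_trans (Finset.card_le_card hsub) Finset.card_biUnion_le
    have hΩR : (0 : ℝ) < ((Fintype.piFinset S).card : ℝ) := by exact_mod_cast hΩpos
    rcases Finset.eq_empty_or_nonempty 𝒵 with hemp | hne
    · rw [hemp, Finset.sum_empty] at h1
      linarith
    · have h2 : ∑ Z ∈ 𝒵, ((Fintype.piFinset (T Z)).card : ℝ) * 2 ^ B.card
          < ∑ Z ∈ 𝒵, ((Fintype.piFinset S).card : ℝ) :=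
        Finset.sum_lt_sum_of_nonempty hne (fun Z hZ => hkey Z hZ)
      rw [Finset.sum_const, nsmul_eq_mul] at h2
      rw [← Finset.sum_mul] at h2
      have h3 : (𝒵.card : ℝ) ≤ 2 ^ B.card := by
        have : 𝒵.card ≤ B.powerset.card := Finset.card_le_card (by rw [h𝒵]; exact Finset.filter_subset _ _)
        rw [Finset.card_powerset] at this
        exact_mod_cast this
      have c1 : ((Fintype.piFinset S).card : ℝ) * 2 ^ B.card
          ≤ (∑ Z ∈ 𝒵, ((Fintype.piFinset (T Z)).card : ℝ)) * 2 ^ B.card :=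
        mul_le_mul_of_nonneg_right h1 (by positivity)
      have c3 : (𝒵.card : ℝ) * ((Fintype.piFinset S).card : ℝ)
          ≤ 2 ^ B.card * ((Fintype.piFinset S).card : ℝ) :=
        mul_le_mul_of_nonneg_right h3 (le_of_lt hΩR)
      nlinarith [c1, h2, c3]
  push_neg at hex
  obtain ⟨g, hgΩ, hgood⟩ := hex
  have hgS : ∀ v : ↥A, g v ∈ S v := Fintype.mem_piFinset.1 hgΩ
  refine ⟨fun v => s((g v).1, (g v).2), ?_, ?_⟩
  · intro v
    have hgv := hgS v
    rw [hS, Finset.mem_offDiag] at hgv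
    obtain ⟨h1', h2', h3'⟩ := hgv
    refine ⟨by simpa [Sym2.mk_isDiag_iff] using h3', ?_⟩
    intro u hu
    rcases Sym2.mem_iff.1 hu with rfl | rfl
    · exact (SimpleGraph.mem_neighborFinset _ _ _).1 h1'
    · exact (SimpleGraph.mem_neighborFinset _ _ _).1 h2'
  · intro Z hZB hindep
    by_contra hle
    push_neg at hle
    have hZ𝒵 : Z ∈ 𝒵 := by
      rw [h𝒵, Finset.mem_filter, Finset.mem_powerset]
      refine ⟨hZB, ?_⟩
      have : ∑ z ∈ Z, ((H.neighborFinset z).card : ℝ)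
          = ∑ z ∈ Z, ((H.neighborSet z).ncard : ℝ) := by
        apply Finset.sum_congr rfl
        intro z _
        rw [hnc]
      rw [this]
      exact hle
    apply hgood Z hZ𝒵
    rw [Fintype.mem_piFinset]
    intro v
    rw [hT, Finset.mem_filter]
    refine ⟨hgS v, ?_⟩
    rintro ⟨hx, hy⟩
    apply hindep v
    intro u hu
    rcases Sym2.mem_iff.1 hu with rfl | rfl
    · exact hx
    · exact hy


end Paper
end

section
/- Every finite graph G with at least one vertex has average degree at least |V(G)|/α(G) − 1, where α(G) is the independence number. -/
open scoped BigOperators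

namespace Paper

variable {V : Type*}

/-- Caro–Wei, relativized to a finset `A`. -/
lemma caro_wei [Fintype V] (G : SimpleGraph V) [DecidableRel G.Adj] (A : Finset V) :
    ∃ s : Finset V, s ⊆ A ∧ IsIndepSet G ↑s ∧
      ∑ v ∈ A, (1 : ℝ) / ((A.filter (G.Adj v)).card + 1) ≤ s.card := by
  classical
  induction A using Finset.strongInduction with
  | _ A ih =>
  rcases A.eq_empty_or_nonempty with rfl | hA
  · exact ⟨∅, by simp, by simp [IsIndepSet], by simp⟩
  obtain ⟨v, hv, hmin⟩ := A.exists_min_image (fun u => ((A.filter (G.Adj u)).card : ℕ)) hA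
  set N : Finset V := A.filter (fun u => u = v ∨ G.Adj v u) with hN
  have hNA : N ⊆ A := Finset.filter_subset _ _
  have hvN : v ∈ N := by simp [hN, hv]
  have hBss : A \ N ⊂ A := Finset.sdiff_ssubset hNA ⟨v, hvN⟩
  obtain ⟨s, hsB, hsInd, hsum⟩ := ih _ hBss
  have hvs : v ∉ s := fun h => (Finset.mem_sdiff.1 (hsB h)).2 hvN
  have hnadj : ∀ u ∈ s, ¬ G.Adj v u := by
    intro u hu hadj
    exact (Finset.mem_sdiff.1 (hsB hu)).2 (by
      simp [hN, (Finset.mem_sdiff.1 (hsB hu)).1, hadj])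
  refine ⟨insert v s, ?_, ?_, ?_⟩
  · exact Finset.insert_subset hv (hsB.trans (Finset.sdiff_subset.trans le_rfl))
  · intro a ha b hb hadj
    simp only [Finset.coe_insert, Set.mem_insert_iff, Finset.mem_coe] at ha hb
    rcases ha with rfl | ha <;> rcases hb with rfl | hb
    · exact G.irrefl hadj
    · exact hnadj b hb hadj
    · exact hnadj a ha hadj.symm
    · exact hsInd ha hb hadj
  · rw [Finset.card_insert_of_notMem hvs]
    -- split the sum over A into N and A \ N
    have hsplit : ∑ u ∈ A, (1:ℝ) / ((A.filter (G.Adj u)).card + 1)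
        = ∑ u ∈ A \ N, (1:ℝ) / ((A.filter (G.Adj u)).card + 1)
          + ∑ u ∈ N, (1:ℝ) / ((A.filter (G.Adj u)).card + 1) :=
      (Finset.sum_sdiff hNA).symm
    have hNcard : (N.card : ℝ) = (A.filter (G.Adj v)).card + 1 := by
      have : N = insert v (A.filter (G.Adj v)) := by
        ext u
        simp only [hN, Finset.mem_filter, Finset.mem_insert]
        constructor
        · rintro ⟨huA, rfl | h⟩
          · exact Or.inl rfl
          · exact Or.inr ⟨huA, h⟩
        · rintro (rfl | ⟨huA, h⟩)
          · exact ⟨hv, Or.inl rfl⟩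
          · exact ⟨huA, Or.inr h⟩
      rw [this, Finset.card_insert_of_notMem (by simp [G.irrefl])]
      push_cast; ring
    have hNsum : ∑ u ∈ N, (1:ℝ) / ((A.filter (G.Adj u)).card + 1) ≤ 1 := by
      calc ∑ u ∈ N, (1:ℝ) / ((A.filter (G.Adj u)).card + 1)
          ≤ ∑ u ∈ N, (1:ℝ) / ((A.filter (G.Adj v)).card + 1) := by
            refine Finset.sum_le_sum fun u hu => ?_
            refine one_div_le_one_div_of_le (by positivity) ?_
            exact_mod_cast Nat.add_le_add_right (hmin u (hNA hu)) 1
        _ = (N.card : ℝ) / ((A.filter (G.Adj v)).card + 1) := by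
            rw [Finset.sum_const, nsmul_eq_mul, mul_one_div]
        _ = 1 := by rw [hNcard, div_self (by positivity)]
    have hBsum : ∑ u ∈ A \ N, (1:ℝ) / ((A.filter (G.Adj u)).card + 1)
        ≤ ∑ u ∈ A \ N, (1:ℝ) / (((A \ N).filter (G.Adj u)).card + 1) := by
      refine Finset.sum_le_sum fun u hu => ?_
      refine one_div_le_one_div_of_le (by positivity) ?_
      have : ((A \ N).filter (G.Adj u)).card ≤ (A.filter (G.Adj u)).card :=
        Finset.card_le_card (Finset.filter_subset_filter _ (Finset.sdiff_subset))
      exact_mod_cast Nat.add_le_add_right this 1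
    rw [hsplit]
    push_cast
    linarith [hsum]

lemma card_le_indepNum [Fintype V] (G : SimpleGraph V) {s : Finset V}
    (hs : IsIndepSet G ↑s) : s.card ≤ indepNum G := by
  refine le_csSup ⟨Fintype.card V, ?_⟩ ⟨s, hs, rfl⟩
  rintro n ⟨t, -, rfl⟩
  exact t.card_le_univ

/-- every finite graph with at least one vertex has average degree at
least `|V(G)|/α(G) − 1`. -/
theorem statement15 {V : Type*} [Fintype V] (G : SimpleGraph V)
    (hn : 1 ≤ Fintype.card V) :
    (Fintype.card V : ℝ) / (indepNum G : ℝ) - 1 ≤ avgDeg G := by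
  classical
  set n := Fintype.card V
  set α := indepNum G
  set m := G.edgeSet.ncard
  -- α ≥ 1
  have hα1 : 1 ≤ α := by
    obtain ⟨v⟩ := Fintype.card_pos_iff.1 hn
    have : ({v} : Finset V).card ≤ α := card_le_indepNum G (by simp [IsIndepSet])
    simpa using this
  have hαpos : (0:ℝ) < α := by exact_mod_cast hα1
  have hnpos : (0:ℝ) < n := by exact_mod_cast hn
  -- Caro–Wei on univ
  obtain ⟨s, -, hsInd, hsum⟩ := caro_wei G (Finset.univ : Finset V)
  have hdeg : ∀ v : V, (Finset.univ.filter (G.Adj v)).card = G.degree v := fun v => by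
    rw [← SimpleGraph.neighborFinset_eq_filter, SimpleGraph.card_neighborFinset_eq_degree]
  have hsα : (s.card : ℝ) ≤ α := by exact_mod_cast card_le_indepNum G hsInd
  have hCW : ∑ v : V, (1:ℝ) / (G.degree v + 1) ≤ α := by
    calc ∑ v : V, (1:ℝ) / (G.degree v + 1)
        = ∑ v ∈ Finset.univ, (1:ℝ) / ((Finset.univ.filter (G.Adj v)).card + 1) := by
          simp [hdeg]
      _ ≤ s.card := hsum
      _ ≤ α := hsα
  -- sum of degrees
  have hm : m = G.edgeFinset.card := by
    show G.edgeSet.ncard = _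
    rw [Set.ncard_eq_toFinset_card']
    congr 1
  have hdegsum : ∑ v : V, ((G.degree v : ℝ) + 1) = 2 * m + n := by
    have := G.sum_degrees_eq_twice_card_edges
    rw [Finset.sum_add_distrib]
    simp only [Finset.sum_const, Finset.card_univ, nsmul_eq_mul, mul_one]
    rw [hm]
    have h2 : ((∑ v : V, G.degree v : ℕ) : ℝ) = 2 * G.edgeFinset.card := by
      exact_mod_cast congrArg Nat.cast this
    push_cast at h2 ⊢
    linarith
  -- Cauchy-Schwarz
  have key : (n:ℝ)^2 ≤ (2*m + n) * α := by
    have pos : ∀ v : V, (0:ℝ) < (G.degree v : ℝ) + 1 := fun v => by positivity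
    have cs := Finset.sum_mul_sq_le_sq_mul_sq Finset.univ
      (fun v => Real.sqrt ((G.degree v : ℝ) + 1))
      (fun v => 1 / Real.sqrt ((G.degree v : ℝ) + 1))
    have h1 : ∀ v : V, Real.sqrt ((G.degree v : ℝ) + 1) *
        (1 / Real.sqrt ((G.degree v : ℝ) + 1)) = 1 := fun v => by
      rw [mul_one_div, div_self (Real.sqrt_ne_zero'.2 (pos v))]
    have h2 : ∀ v : V, Real.sqrt ((G.degree v : ℝ) + 1) ^ 2 = (G.degree v : ℝ) + 1 :=
      fun v => Real.sq_sqrt (pos v).le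
    have h3 : ∀ v : V, (1 / Real.sqrt ((G.degree v : ℝ) + 1)) ^ 2
        = 1 / ((G.degree v : ℝ) + 1) := fun v => by
      rw [div_pow, one_pow, h2]
    simp only [h1, h2, h3, Finset.sum_const, Finset.card_univ, nsmul_eq_mul, mul_one] at cs
    calc (n:ℝ)^2 ≤ (∑ v : V, ((G.degree v : ℝ) + 1)) * ∑ v : V, 1/((G.degree v : ℝ)+1) := cs
      _ ≤ (2*m + n) * α := by
          rw [hdegsum]
          refine mul_le_mul_of_nonneg_left ?_ (by positivity)
          simpa using hCW
  have hαne : (α:ℝ) ≠ 0 := hαpos.ne'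
  rw [avgDeg, div_sub_one hαne, div_le_div_iff₀ hαpos hnpos]
  nlinarith [key]


end Paper
end

section
/- Let X be a sum of n independent Bernoulli random variables each with mean p, and let μ = np. Then for every δ ≥ 0, Prob[X ≥ (1+δ)μ] ≤ exp(−δ²μ/(2+δ)). -/
open scoped BigOperators

namespace Paper

variable {V : Type*}

open MeasureTheory

lemma keylog {x : ℝ} (hx : 0 ≤ x) : 2 * x ≤ (2 + x) * Real.log (1 + x) := by
  set f : ℝ → ℝ := fun y => (2 + y) * Real.log (1 + y) - 2 * y with hf
  have hmono : MonotoneOn f (Set.Ici (0:ℝ)) := by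
    apply monotoneOn_of_hasDerivWithinAt_nonneg (convex_Ici 0)
      (f' := fun y => Real.log (1 + y) + (2 + y) * (1 / (1 + y)) - 2)
    · apply ContinuousOn.sub
      · apply ContinuousOn.mul (by fun_prop)
        apply ContinuousOn.log (by fun_prop)
        intro y hy
        have : (0:ℝ) ≤ y := hy
        positivity
      · fun_prop
    · intro y hy
      rw [interior_Ici] at hy
      have hy0 : (0:ℝ) < y := hy
      have h1y : (0:ℝ) < 1 + y := by linarith
      have h1 : HasDerivAt (fun z : ℝ => Real.log (1 + z)) (1 / (1 + y)) y := by
        have := ((hasDerivAt_id y).const_add 1).log (by simp; linarith)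
        simpa using this
      have h3 : HasDerivAt (fun z : ℝ => 2 * z) 2 y := by
        simpa using (hasDerivAt_id y).const_mul 2
      have h2 : HasDerivAt f (1 * Real.log (1 + y) + (2 + y) * (1 / (1 + y)) - 2) y :=
        (((hasDerivAt_id y).const_add 2).mul h1).sub h3
      rw [one_mul] at h2
      exact h2.hasDerivWithinAt
    · intro y hy
      rw [interior_Ici] at hy
      have hy0 : (0:ℝ) < y := hy
      have h1y : (0:ℝ) < 1 + y := by linarith
      have hlog : y / (1 + y) ≤ Real.log (1 + y) := by
        have h := Real.log_le_sub_one_of_pos (show (0:ℝ) < (1 + y)⁻¹ by positivity)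
        rw [Real.log_inv] at h
        have he : y / (1 + y) = 1 - (1 + y)⁻¹ := by field_simp; ring
        linarith
      have he2 : (2 + y) * (1 / (1 + y)) - 2 = -(y / (1 + y)) := by field_simp; ring
      linarith
  have h0 : f 0 ≤ f x := hmono Set.self_mem_Ici hx hx
  simp only [hf] at h0
  norm_num at h0
  linarith

/-- Chernoff upper tail: if `X` is the sum of `n` independent
Bernoulli variables with mean `p` (modelled on the product of `n` Bernoulli
measures on `Bool`), `μ = np`, then for every `δ ≥ 0`,
`Prob[X ≥ (1+δ)μ] ≤ exp(−δ²μ/(2+δ))`. -/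
theorem statement16 (n : ℕ) (p : ℝ) (hp0 : 0 ≤ p) (hp1 : p ≤ 1) (δ : ℝ) (hδ : 0 ≤ δ) :
    (MeasureTheory.Measure.pi fun _ : Fin n =>
        (PMF.bernoulli (Real.toNNReal p) (Real.toNNReal_le_one.mpr hp1)).toMeasure)
      {ω : Fin n → Bool | (1 + δ) * (n * p) ≤ ∑ i, (if ω i then (1 : ℝ) else 0)}
      ≤ ENNReal.ofReal (Real.exp (-(δ ^ 2 * (n * p)) / (2 + δ))) := by
  classical
  set μb := (PMF.bernoulli (Real.toNNReal p) (Real.toNNReal_le_one.mpr hp1)).toMeasure with hμb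
  set q : ℝ := 1 - p with hq
  have hq0 : 0 ≤ q := by simp [hq]; linarith
  set t : ℝ := Real.log (1 + δ) with htdef
  have ht0 : 0 ≤ t := Real.log_nonneg (by linarith)
  have het : Real.exp t = 1 + δ := Real.exp_log (by linarith)
  set a : ℝ := (1 + δ) * (n * p) with ha
  set w : Bool → ℝ := fun b => if b then p else q with hw
  have hw0 : ∀ b, 0 ≤ w b := by intro b; cases b <;> simp [hw, hq0, hp0]
  set X : (Fin n → Bool) → ℝ := fun ω => ∑ i, (if ω i then (1:ℝ) else 0) with hX
  set S : Finset (Fin n → Bool) := Finset.univ.filter (fun ω => a ≤ X ω) with hS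
  -- singleton measure
  have hsingle : ∀ ω : Fin n → Bool,
      (Measure.pi fun _ : Fin n => μb) {ω} = ENNReal.ofReal (∏ i, w (ω i)) := by
    intro ω
    rw [← Set.univ_pi_singleton, Measure.pi_pi]
    rw [ENNReal.ofReal_prod_of_nonneg (fun i _ => hw0 (ω i))]
    congr 1
    funext i
    rw [hμb, PMF.toMeasure_apply_singleton _ _ (measurableSet_singleton _)]
    cases hωi : ω i
    · simp [PMF.bernoulli_apply, hw, hq]
      rw [← ENNReal.ofReal_one]; change ENNReal.ofReal 1 - ENNReal.ofReal p = _
      rw [← ENNReal.ofReal_sub _ hp0]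
    · simp [PMF.bernoulli_apply, hw]
      rfl
  -- measure of the event
  have hsetS : {ω : Fin n → Bool | a ≤ X ω} = ⋃ ω ∈ S, {ω} := by
    ext ω; simp [hS]
  have hmeas : (Measure.pi fun _ : Fin n => μb) {ω : Fin n → Bool | a ≤ X ω}
      = ENNReal.ofReal (∑ ω ∈ S, ∏ i, w (ω i)) := by
    rw [hsetS, measure_biUnion_finset]
    · rw [ENNReal.ofReal_sum_of_nonneg (fun ω _ => Finset.prod_nonneg fun i _ => hw0 (ω i))]
      exact Finset.sum_congr rfl fun ω _ => hsingle ω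
    · intro x _ y _ hxy
      simp [Function.onFun, Set.disjoint_singleton, hxy]
    · intro b _; exact measurableSet_singleton b
  show (Measure.pi fun _ : Fin n => μb) {ω : Fin n → Bool | a ≤ X ω} ≤ _
  rw [hmeas]
  apply ENNReal.ofReal_le_ofReal
  -- the real inequality
  have key : ∑ ω ∈ S, ∏ i, w (ω i)
      ≤ Real.exp (-(t * a)) * (q + p * Real.exp t) ^ n := by
    calc ∑ ω ∈ S, ∏ i, w (ω i)
        ≤ ∑ ω ∈ S, (∏ i, w (ω i)) * Real.exp (t * (X ω - a)) := by
          apply Finset.sum_le_sum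
          intro ω hω
          have hωa : a ≤ X ω := by simpa [hS] using hω
          nlinarith [Real.one_le_exp (by nlinarith : 0 ≤ t * (X ω - a)),
            Finset.prod_nonneg fun i (_ : i ∈ Finset.univ) => hw0 (ω i)]
      _ ≤ ∑ ω : Fin n → Bool, (∏ i, w (ω i)) * Real.exp (t * (X ω - a)) := by
          apply Finset.sum_le_sum_of_subset_of_nonneg (Finset.filter_subset _ _)
          intro ω _ _
          exact mul_nonneg (Finset.prod_nonneg fun i _ => hw0 (ω i)) (Real.exp_pos _).le
      _ = Real.exp (-(t * a)) *
            ∑ ω : Fin n → Bool, ∏ i, (w (ω i) * Real.exp (t * (if ω i then (1:ℝ) else 0))) := by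
          rw [Finset.mul_sum]
          apply Finset.sum_congr rfl
          intro ω _
          rw [Finset.prod_mul_distrib, ← Real.exp_sum]
          have hsum : ∑ i, t * (if ω i then (1:ℝ) else 0) = t * X ω := by
            simp only [hX, Finset.mul_sum]
          rw [hsum, show t * (X ω - a) = t * X ω + -(t * a) by ring, Real.exp_add]
          ring
      _ = Real.exp (-(t * a)) * (q + p * Real.exp t) ^ n := by
          congr 1
          have hswap := Finset.sum_prod_piFinset (ι := Fin n) (Finset.univ : Finset Bool)
            (fun _ b => w b * Real.exp (t * (if b then (1:ℝ) else 0)))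
          rw [Fintype.piFinset_univ] at hswap
          rw [hswap, Finset.prod_const, Finset.card_univ, Fintype.card_fin]
          congr 1
          rw [show (Finset.univ : Finset Bool) = {true, false} by rfl]
          rw [Finset.sum_insert (by simp), Finset.sum_singleton]
          simp [hw]
          ring
  refine key.trans ?_
  have hnp0 : (0:ℝ) ≤ (n:ℝ) * p := by positivity
  have h1 : q + p * Real.exp t ≤ Real.exp (p * (Real.exp t - 1)) := by
    have := Real.add_one_le_exp (p * (Real.exp t - 1))
    simp [hq]; nlinarith
  have hbase : (0:ℝ) ≤ q + p * Real.exp t := by positivity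
  have h2 : (q + p * Real.exp t) ^ n ≤ Real.exp ((n:ℝ) * (p * (Real.exp t - 1))) := by
    calc (q + p * Real.exp t) ^ n ≤ Real.exp (p * (Real.exp t - 1)) ^ n :=
          pow_le_pow_left₀ hbase h1 n
      _ = Real.exp ((n:ℝ) * (p * (Real.exp t - 1))) := (Real.exp_nat_mul _ n).symm
  calc Real.exp (-(t * a)) * (q + p * Real.exp t) ^ n
      ≤ Real.exp (-(t * a)) * Real.exp ((n:ℝ) * (p * (Real.exp t - 1))) := by
        exact mul_le_mul_of_nonneg_left h2 (Real.exp_pos _).le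
    _ = Real.exp ((n:ℝ) * (p * (Real.exp t - 1)) - t * a) := by
        rw [← Real.exp_add]; ring_nf
    _ ≤ Real.exp (-(δ ^ 2 * (n * p)) / (2 + δ)) := by
        apply Real.exp_le_exp.mpr
        rw [het, ha]
        have h2δ : (0:ℝ) < 2 + δ := by linarith
        rw [le_div_iff₀ h2δ]
        have hkey : 2 * δ ≤ (2 + δ) * t := keylog hδ
        have h3 : (2 * δ) * ((n:ℝ) * p * (1 + δ)) ≤ ((2 + δ) * t) * ((n:ℝ) * p * (1 + δ)) :=
          mul_le_mul_of_nonneg_right hkey (by positivity)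
        nlinarith [h3]

end Paper
end

section
/- Let X be a sum of n independent Bernoulli random variables each with mean p, and let μ = np. Then for every δ with 0 ≤ δ ≤ 1, Prob[X ≤ (1−δ)μ] ≤ exp(−δ²μ/2). -/
open scoped BigOperators

namespace Paper

variable {V : Type*}

section Chernoff
open MeasureTheory ProbabilityTheory Real

lemma aux_log (x : ℝ) (hx0 : 0 < x) (hx1 : x ≤ 1) : (x^2 - 1)/2 ≤ x * Real.log x := by
  have hd : ∀ y : ℝ, 0 < y → HasDerivAt (fun y : ℝ => y * Real.log y - (y^2-1)/2)
      (Real.log y + 1 - y) y := by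
    intro y hy0
    have h1 : HasDerivAt (fun y : ℝ => y * Real.log y) (Real.log y + 1) y := by
      have := (hasDerivAt_id y).mul (Real.hasDerivAt_log hy0.ne')
      exact this.congr_deriv (by simp only [id, one_mul, mul_inv_cancel₀ hy0.ne'])
    have h2 : HasDerivAt (fun y : ℝ => (y^2-1)/2) y y := by
      have := ((hasDerivAt_pow 2 y).sub_const 1).div_const 2
      simpa using this
    exact h1.sub h2
  have h : AntitoneOn (fun y : ℝ => y * Real.log y - (y^2-1)/2) (Set.Icc x 1) := by
    apply antitoneOn_of_deriv_nonpos (convex_Icc _ _)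
    · fun_prop (disch := intros; positivity)
    · intro y hy
      rw [interior_Icc] at hy
      exact ((hd y (lt_trans hx0 hy.1)).differentiableAt).differentiableWithinAt
    · intro y hy
      rw [interior_Icc] at hy
      have hy0 : 0 < y := lt_trans hx0 hy.1
      rw [(hd y hy0).deriv]
      have := Real.log_le_sub_one_of_pos hy0
      linarith
  have := h (Set.left_mem_Icc.2 hx1) (Set.right_mem_Icc.2 hx1) hx1
  simp at this
  linarith

lemma main_case (n : ℕ) (p : ℝ) (hp0 : 0 ≤ p) (hp1 : p ≤ 1) (δ : ℝ)
    (hδ0 : 0 ≤ δ) (hδ1 : δ < 1) :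
    (MeasureTheory.Measure.pi fun _ : Fin n =>
        (PMF.bernoulli (Real.toNNReal p) (Real.toNNReal_le_one.mpr hp1)).toMeasure)
      {ω : Fin n → Bool | ∑ i, (if ω i then (1 : ℝ) else 0) ≤ (1 - δ) * (n * p)}
      ≤ ENNReal.ofReal (Real.exp (-(δ ^ 2 * (n * p)) / 2)) := by
  letI : MeasureSpace Bool :=
    ⟨(PMF.bernoulli (Real.toNNReal p) (Real.toNNReal_le_one.mpr hp1)).toMeasure⟩
  haveI hvp : IsProbabilityMeasure (volume : Measure Bool) :=
    PMF.toMeasure.isProbabilityMeasure _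
  set μ : Measure (Fin n → Bool) := Measure.pi fun _ => (volume : Measure Bool) with hμ
  have hprob : IsProbabilityMeasure μ := by infer_instance
  set X : (Fin n → Bool) → ℝ := fun ω => ∑ i, (if ω i then (1 : ℝ) else 0) with hX
  set t : ℝ := Real.log (1 - δ) with ht
  have h1δ : 0 < 1 - δ := by linarith
  have htle : t ≤ 0 := Real.log_nonpos (by linarith) (by linarith)
  have hexpt : Real.exp t = 1 - δ := Real.exp_log h1δ
  -- single coordinate integral
  have hone : ∫ x : Bool, Real.exp (t * (if x then (1:ℝ) else 0)) = 1 + p * (Real.exp t - 1) := by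
    rw [show (volume : Measure Bool) =
      (PMF.bernoulli (Real.toNNReal p) (Real.toNNReal_le_one.mpr hp1)).toMeasure from rfl]
    rw [PMF.integral_eq_sum]
    simp [PMF.bernoulli_apply, NNReal.coe_sub (Real.toNNReal_le_one.mpr hp1),
      Real.coe_toNNReal _ hp0]
    ring
  -- mgf computation
  have hmgf : mgf X μ t = (1 + p * (Real.exp t - 1)) ^ n := by
    rw [mgf, ← hone]
    have : ∀ ω : Fin n → Bool, Real.exp (t * X ω)
        = ∏ i, Real.exp (t * (if ω i then (1:ℝ) else 0)) := by
      intro ω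
      rw [← Real.exp_sum, ← Finset.mul_sum]
    simp_rw [this]
    rw [show μ = (volume : Measure (Fin n → Bool)) from (volume_pi).symm]
    rw [volume_pi, MeasureTheory.integral_fintype_prod_eq_pow (ι := Fin n)
      (fun x : Bool => Real.exp (t * (if x then (1:ℝ) else 0)))]
    simp
  have hint : Integrable (fun ω => Real.exp (t * X ω)) μ := .of_finite
  have hcher := measure_le_le_exp_mul_mgf (X := X) (μ := μ) ((1 - δ) * (n * p)) htle hint
  rw [hmgf] at hcher
  -- numeric bound
  have hq0 : (0:ℝ) ≤ 1 + p * (Real.exp t - 1) := by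
    rw [hexpt]; nlinarith
  have hqpow : (1 + p * (Real.exp t - 1)) ^ n ≤ Real.exp (n * (p * (Real.exp t - 1))) := by
    rw [Real.exp_nat_mul]
    exact pow_le_pow_left₀ hq0 (Real.add_one_le_exp _ |>.trans_eq' (by ring)) n
  have hnum : Real.exp (-t * ((1 - δ) * (n * p))) * Real.exp (n * (p * (Real.exp t - 1)))
      ≤ Real.exp (-(δ ^ 2 * (n * p)) / 2) := by
    rw [← Real.exp_add, Real.exp_le_exp]
    have hlog := aux_log (1 - δ) h1δ (by linarith)
    have hnp : (0:ℝ) ≤ (n:ℝ) * p := by positivity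
    rw [hexpt, ht]
    nlinarith [mul_le_mul_of_nonneg_left hlog hnp]
  have hfin : (μ {ω | X ω ≤ (1 - δ) * (n * p)}).toReal ≤ Real.exp (-(δ ^ 2 * (n * p)) / 2) := by
    calc (μ {ω | X ω ≤ (1 - δ) * (n * p)}).toReal
        ≤ Real.exp (-t * ((1 - δ) * (n * p))) * (1 + p * (Real.exp t - 1)) ^ n := hcher
      _ ≤ Real.exp (-t * ((1 - δ) * (n * p))) * Real.exp (n * (p * (Real.exp t - 1))) := by
          exact mul_le_mul_of_nonneg_left hqpow (Real.exp_pos _).le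
      _ ≤ _ := hnum
  have : μ {ω | X ω ≤ (1 - δ) * (n * p)} ≠ ⊤ := measure_ne_top _ _
  show μ {ω | X ω ≤ (1 - δ) * (n * p)} ≤ _
  rw [← ENNReal.ofReal_toReal this]
  exact ENNReal.ofReal_le_ofReal hfin

end Chernoff

/-- Chernoff lower tail: if `X` is the sum of `n` independent
Bernoulli variables with mean `p` (modelled on the product of `n` Bernoulli
measures on `Bool`), `μ = np`, then for every `0 ≤ δ ≤ 1`,
`Prob[X ≤ (1−δ)μ] ≤ exp(−δ²μ/2)`. -/
theorem statement17 (n : ℕ) (p : ℝ) (hp0 : 0 ≤ p) (hp1 : p ≤ 1) (δ : ℝ)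
    (hδ0 : 0 ≤ δ) (hδ1 : δ ≤ 1) :
    (MeasureTheory.Measure.pi fun _ : Fin n =>
        (PMF.bernoulli (Real.toNNReal p) (Real.toNNReal_le_one.mpr hp1)).toMeasure)
      {ω : Fin n → Bool | ∑ i, (if ω i then (1 : ℝ) else 0) ≤ (1 - δ) * (n * p)}
      ≤ ENNReal.ofReal (Real.exp (-(δ ^ 2 * (n * p)) / 2)) := by
  rcases lt_or_eq_of_le hδ1 with h | h
  · exact main_case n p hp0 hp1 δ hδ0 h
  · subst h
    set μm := MeasureTheory.Measure.pi fun _ : Fin n =>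
      (PMF.bernoulli (Real.toNNReal p) (Real.toNNReal_le_one.mpr hp1)).toMeasure with hμm
    have hc : Continuous fun d : ℝ => ENNReal.ofReal (Real.exp (-(d ^ 2 * (n * p)) / 2)) :=
      ENNReal.continuous_ofReal.comp (Real.continuous_exp.comp (by continuity))
    refine ge_of_tendsto ((hc.tendsto 1).mono_left (nhdsWithin_le_nhds (s := Set.Iio 1))) ?_
    filter_upwards [Ioo_mem_nhdsLT_of_mem (Set.mem_Ioc.2 ⟨zero_lt_one, le_refl (1:ℝ)⟩)]
      with d hd
    have hnp : (0:ℝ) ≤ (n:ℝ) * p := by positivity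
    have hsub : {ω : Fin n → Bool | ∑ i, (if ω i then (1 : ℝ) else 0) ≤ (1 - 1) * (n * p)}
        ⊆ {ω : Fin n → Bool | ∑ i, (if ω i then (1 : ℝ) else 0) ≤ (1 - d) * (n * p)} := by
      intro ω hω
      simp only [Set.mem_setOf_eq] at hω ⊢
      refine hω.trans ?_
      nlinarith [hd.2]
    exact (MeasureTheory.measure_mono hsub).trans (main_case n p hp0 hp1 d hd.1.le hd.2)

end Paper
end

section
/- There exists a class C of finite graphs that is nowhere dense but has unbounded Hall ratio; specifically, any sequence of graphs (G_n) with girth(G_n) → ∞, maximum degree of G_n bounded by a fixed non-decreasing function of girth(G_n), and |V(G_n)|/α(G_n) → ∞ yields such a class. -/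
open scoped BigOperators

namespace Paper

variable {V : Type*}

/-- `G'` is a shallow minor of `G` at depth `r`: it is obtained by deleting vertices
and edges and contracting pairwise disjoint branch sets, each of radius at most `r`. -/
def IsShallowMinor {V W : Type*} (r : ℕ) (G : SimpleGraph V) (G' : SimpleGraph W) : Prop :=
  ∃ S : W → Set V,
    (∀ w, (S w).Nonempty) ∧
    Pairwise (Function.onFun Disjoint S) ∧
    (∀ w, ∃ c ∈ S w, ∀ x ∈ S w, ∃ p : G.Walk c x,
      p.length ≤ r ∧ ∀ z ∈ p.support, z ∈ S w) ∧
    (∀ u w, G'.Adj u w → ∃ x ∈ S u, ∃ y ∈ S w, G.Adj x y)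

open SimpleGraph Finset

private lemma girth_le_of_cycle {α : Type*} {G : SimpleGraph α} {a : α} {w : G.Walk a a}
    (hw : w.IsCycle) : G.girth ≤ w.length := by
  have h : G.egirth ≤ (w.length : ℕ∞) :=
    iInf_le_of_le a (iInf_le_of_le w (iInf_le_of_le hw le_rfl))
  calc G.girth = G.egirth.toNat := rfl
    _ ≤ ((w.length : ℕ∞)).toNat := ENat.toNat_le_toNat h (by simp)
    _ = w.length := by simp

private lemma cycle_from_edge {α : Type*} {G : SimpleGraph α} {a b : α} (hab : G.Adj a b)
    (q : G.Walk b a) (hq : s(a, b) ∉ q.edges) : G.girth ≤ q.length + 1 := by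
  classical
  have hcyc : (SimpleGraph.Walk.cons hab q.bypass).IsCycle := by
    rw [SimpleGraph.Walk.cons_isCycle_iff]
    exact ⟨q.bypass_isPath, fun h => hq (q.edges_bypass_subset h)⟩
  have := girth_le_of_cycle hcyc
  simp only [SimpleGraph.Walk.length_cons] at this
  have := q.length_bypass_le
  omega

private lemma ball_step {α : Type*} {G : SimpleGraph α} {c y : α} {k : ℕ}
    (q : G.Walk y c) (h : q.length ≤ k + 1) :
    ∃ x, (∃ p : G.Walk c x, p.length ≤ k) ∧ (y = x ∨ G.Adj x y) := by
  cases q with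
  | nil => exact ⟨c, ⟨SimpleGraph.Walk.nil, Nat.zero_le _⟩, Or.inl rfl⟩
  | cons hadj q' =>
    refine ⟨_, ⟨q'.reverse, ?_⟩, Or.inr hadj.symm⟩
    simp only [SimpleGraph.Walk.length_reverse]
    simp only [SimpleGraph.Walk.length_cons] at h
    omega

private lemma ball_card {α : Type*} [Fintype α] {G : SimpleGraph α} {D : ℕ}
    (hD : ∀ v, (G.neighborSet v).ncard < D) (c : α) (k : ℕ) :
    ({x | ∃ p : G.Walk c x, p.length ≤ k} : Set α).ncard ≤ D ^ k := by
  classical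
  have hset : ∀ j, ({x | ∃ p : G.Walk c x, p.length ≤ j} : Set α)
      = ↑(Finset.univ.filter (fun x => ∃ p : G.Walk c x, p.length ≤ j)) := by
    intro j; ext x; simp
  have key : ∀ j, (Finset.univ.filter
      (fun x => ∃ p : G.Walk c x, p.length ≤ j)).card ≤ D ^ j := by
    intro j
    induction j with
    | zero =>
      have : Finset.univ.filter (fun x => ∃ p : G.Walk c x, p.length ≤ 0) ⊆ {c} := by
        intro x hx
        simp only [Finset.mem_filter] at hx
        obtain ⟨-, p, hp⟩ := hx
        have := p.eq_of_length_eq_zero (Nat.le_zero.mp hp)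
        simp [this]
      simpa using Finset.card_le_card this
    | succ j ih =>
      have hsub : Finset.univ.filter (fun x => ∃ p : G.Walk c x, p.length ≤ j + 1) ⊆
          (Finset.univ.filter (fun x => ∃ p : G.Walk c x, p.length ≤ j)).biUnion
            (fun x => insert x (G.neighborFinset x)) := by
        intro y hy
        simp only [Finset.mem_filter] at hy
        obtain ⟨-, p, hp⟩ := hy
        obtain ⟨x, hx, hxy⟩ := ball_step p.reverse (by simpa using hp)
        rw [Finset.mem_biUnion]
        refine ⟨x, by simpa using hx, ?_⟩
        rcases hxy with rfl | h
        · exact Finset.mem_insert_self _ _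
        · exact Finset.mem_insert_of_mem (by simpa using h)
      calc _ ≤ _ := Finset.card_le_card hsub
        _ ≤ ∑ x ∈ Finset.univ.filter (fun x => ∃ p : G.Walk c x, p.length ≤ j),
              (insert x (G.neighborFinset x)).card := Finset.card_biUnion_le
        _ ≤ ∑ x ∈ Finset.univ.filter (fun x => ∃ p : G.Walk c x, p.length ≤ j), D := by
            refine Finset.sum_le_sum fun x _ => ?_
            have h1 := hD x
            rw [Set.ncard_eq_toFinset_card'] at h1
            have := Finset.card_insert_le x (G.neighborFinset x)
            simp only [neighborFinset_def] at *
            omega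
        _ ≤ D ^ j * D := by
            rw [Finset.sum_const, smul_eq_mul]
            exact Nat.mul_le_mul_right _ ih
        _ = D ^ (j+1) := by ring
  rw [hset k, Set.ncard_coe_finset]
  exact key k

/-- Within a branch set of radius ≤ r, connect any two vertices by a walk of length ≤ 2r
with support inside the set. -/
private lemma connect_in_set {V : Type*} {G : SimpleGraph V} {T : Set V} {r : ℕ}
    (hc : ∃ c ∈ T, ∀ x ∈ T, ∃ p : G.Walk c x, p.length ≤ r ∧ ∀ z ∈ p.support, z ∈ T)
    {x y : V} (hx : x ∈ T) (hy : y ∈ T) :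
    ∃ p : G.Walk x y, p.length ≤ 2 * r ∧ ∀ z ∈ p.support, z ∈ T := by
  obtain ⟨c, -, hall⟩ := hc
  obtain ⟨p1, hl1, hs1⟩ := hall x hx
  obtain ⟨p2, hl2, hs2⟩ := hall y hy
  refine ⟨p1.reverse.append p2, ?_, ?_⟩
  · rw [SimpleGraph.Walk.length_append, SimpleGraph.Walk.length_reverse]; omega
  · intro z hz
    rw [SimpleGraph.Walk.mem_support_append_iff] at hz
    rcases hz with hz | hz
    · exact hs1 z (by simpa using hz)
    · exact hs2 z hz

private lemma shallow_minor_no_triangle {V W : Type*} {G : SimpleGraph V}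
    {G' : SimpleGraph W} {r : ℕ} (hm : IsShallowMinor r G G')
    (hg : 6 * r + 3 < G.girth) {u v w : W}
    (huv : G'.Adj u v) (hvw : G'.Adj v w) (huw : G'.Adj u w) : False := by
  obtain ⟨S, hne, hdisj, hrad, hadj⟩ := hm
  obtain ⟨a1, ha1, b1, hb1, hab⟩ := hadj u v huv
  obtain ⟨b2, hb2, c1, hc1, hbc⟩ := hadj v w hvw
  obtain ⟨c2, hc2, a2, ha2, hca⟩ := hadj w u huw.symm
  have dUV : Disjoint (S u) (S v) := hdisj huv.ne
  have dVW : Disjoint (S v) (S w) := hdisj hvw.ne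
  have dUW : Disjoint (S u) (S w) := hdisj huw.ne
  obtain ⟨pB, hlB, hsB⟩ := connect_in_set (hrad v) hb1 hb2
  obtain ⟨pC, hlC, hsC⟩ := connect_in_set (hrad w) hc1 hc2
  obtain ⟨pA, hlA, hsA⟩ := connect_in_set (hrad u) ha2 ha1
  -- walk from b1 to a1 avoiding the edge s(a1, b1)
  set Q : G.Walk b1 a1 :=
    pB.append (SimpleGraph.Walk.cons hbc (pC.append (SimpleGraph.Walk.cons hca pA))) with hQ
  have hlen : Q.length ≤ 6 * r + 2 := by
    simp only [hQ, SimpleGraph.Walk.length_append, SimpleGraph.Walk.length_cons]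
    omega
  have hnotmem : s(a1, b1) ∉ Q.edges := by
    intro hmem
    simp only [hQ, SimpleGraph.Walk.edges_append, SimpleGraph.Walk.edges_cons,
      List.mem_append, List.mem_cons] at hmem
    rcases hmem with hB | hBC | hC | hCA | hA
    · have : a1 ∈ pB.support := pB.fst_mem_support_of_mem_edges hB
      exact (Set.disjoint_left.mp dUV ha1) (hsB a1 this)
    · rw [Sym2.eq_iff] at hBC
      rcases hBC with ⟨h1, -⟩ | ⟨h1, -⟩
      · exact (Set.disjoint_left.mp dUV ha1) (by rw [h1]; exact hb2)
      · exact (Set.disjoint_left.mp dUW ha1) (by rw [h1]; exact hc1)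
    · have : a1 ∈ pC.support := pC.fst_mem_support_of_mem_edges hC
      exact (Set.disjoint_left.mp dUW ha1) (hsC a1 this)
    · rw [Sym2.eq_iff] at hCA
      rcases hCA with ⟨-, h2⟩ | ⟨-, h2⟩
      · exact (Set.disjoint_left.mp dUV (by rw [h2]; exact ha2)) hb1
      · exact (Set.disjoint_left.mp dVW hb1) (by rw [h2]; exact hc2)
    · have : b1 ∈ pA.support := pA.snd_mem_support_of_mem_edges hA
      exact (Set.disjoint_left.mp dUV (hsA b1 this)) hb1
  have := cycle_from_edge hab Q hnotmem
  omega

private lemma clique_bound_deg {V W : Type*} [Fintype V] {G : SimpleGraph V}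
    {G' : SimpleGraph W} {r D : ℕ} (hm : IsShallowMinor r G G')
    (hD : ∀ v, (G.neighborSet v).ncard < D)
    (s : Finset W) (hs : G'.IsClique ↑s) : s.card ≤ D ^ r * D + 1 := by
  classical
  obtain ⟨S, hne, hdisj, hrad, hadj⟩ := hm
  rcases s.eq_empty_or_nonempty with rfl | ⟨u, hu⟩
  · simp
  -- the branch set of u is small
  obtain ⟨c, hc, hball⟩ := hrad u
  have hSfin : (S u).Finite := Set.toFinite _
  have hScard : hSfin.toFinset.card ≤ D ^ r := by
    rw [← Set.ncard_eq_toFinset_card _ hSfin]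
    refine le_trans (Set.ncard_le_ncard ?_ (Set.toFinite _)) (ball_card hD c r)
    intro x hx
    obtain ⟨p, hp, -⟩ := hball x hx
    exact ⟨p, hp⟩
  -- target finset of edge-pairs out of S u
  set T : Finset (V × V) :=
    hSfin.toFinset.biUnion (fun x => (G.neighborFinset x).image (fun y => (x, y))) with hT
  have hTcard : T.card ≤ D ^ r * D := by
    calc T.card ≤ ∑ x ∈ hSfin.toFinset, ((G.neighborFinset x).image (fun y => (x, y))).card :=
          Finset.card_biUnion_le
      _ ≤ ∑ x ∈ hSfin.toFinset, D := by
          refine Finset.sum_le_sum fun x _ => ?_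
          refine le_trans Finset.card_image_le ?_
          have := hD x
          rw [Set.ncard_eq_toFinset_card'] at this
          simp only [neighborFinset_def]
          omega
      _ ≤ D ^ r * D := by
          rw [Finset.sum_const, smul_eq_mul]
          exact Nat.mul_le_mul_right _ hScard
  -- choice of an edge for each other clique vertex
  have hexists : ∀ w ∈ s.erase u, ∃ p : V × V, p.1 ∈ S u ∧ p.2 ∈ S w ∧ G.Adj p.1 p.2 := by
    intro w hw
    have hwne : w ≠ u := Finset.ne_of_mem_erase hw
    have hadj' := hadj u w (hs hu (Finset.mem_of_mem_erase hw) (Ne.symm hwne))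
    obtain ⟨x, hx, y, hy, hxy⟩ := hadj'
    exact ⟨(x, y), hx, hy, hxy⟩
  choose f hf1 hf2 hf3 using hexists
  have hinj : ∀ w (hw : w ∈ s.erase u), ∀ w' (hw' : w' ∈ s.erase u), f w hw = f w' hw' → w = w' := by
    intro w hw w' hw' heq
    by_contra hne'
    have hd : Disjoint (S w) (S w') := hdisj hne'
    have h2 : (f w hw).2 ∈ S w' := heq ▸ hf2 w' hw'
    exact (Set.disjoint_left.mp hd (hf2 w hw)) h2
  have hcard : (s.erase u).card ≤ T.card := by
    refine Finset.card_le_card_of_injOn (fun w => if h : w ∈ s.erase u then f w h else (c, c))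
      ?_ ?_
    · intro w hw
      simp only [Finset.mem_coe] at hw ⊢
      simp only [hw, dif_pos]
      rw [hT, Finset.mem_biUnion]
      refine ⟨(f w hw).1, hSfin.mem_toFinset.mpr (hf1 w hw), ?_⟩
      rw [Finset.mem_image]
      exact ⟨(f w hw).2, (mem_neighborFinset _ _ _).mpr (hf3 w hw), rfl⟩
    · intro w hw w' hw' heq
      simp only [Finset.mem_coe] at hw hw'
      simp only [hw, hw', dif_pos] at heq
      exact hinj w hw w' hw' heq
  have : s.card = (s.erase u).card + 1 := by
    rw [Finset.card_erase_of_mem hu]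
    have := Finset.card_pos.mpr ⟨u, hu⟩
    omega
  omega


private lemma subIndepNum_top {V : Type*} [Fintype V] (G : SimpleGraph V) :
    subIndepNum G ⊤ = indepNum G := by
  unfold subIndepNum indepNum
  congr 1
  ext n
  constructor
  · rintro ⟨s, -, h, rfl⟩
    exact ⟨s, fun u hu v hv => by simpa using h hu hv, rfl⟩
  · rintro ⟨s, h, rfl⟩
    exact ⟨s, by simp, fun u hu v hv => by simpa using h hu hv, rfl⟩

/-- any sequence of finite graphs `Gs` whose girths tend to infinity,
whose maximum degree is bounded by a fixed non-decreasing function of the girth, and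
with `|V(G_n)|/α(G_n) → ∞`, forms a class that is nowhere dense (shallow minors at
each depth `r` have clique number bounded by a function of `r`) but has unbounded
Hall ratio. -/
theorem statement19 (Gs : ℕ → Σ n : ℕ, SimpleGraph (Fin n))
    (F : ℕ → ℕ) (hF : Monotone F)
    (hgirth : ∀ k : ℕ, ∃ N : ℕ, ∀ n ≥ N, k < (Gs n).2.girth)
    (hdeg : ∀ n : ℕ, ∀ v, (((Gs n).2.neighborSet v).ncard : ℕ) < F ((Gs n).2.girth))
    (halpha : ∀ c : ℝ, ∃ n : ℕ, c < ((Gs n).1 : ℝ) / (indepNum (Gs n).2 : ℝ)) :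
    (∃ g : ℕ → ℕ, ∀ (r n m : ℕ) (G' : SimpleGraph (Fin m)),
      IsShallowMinor r (Gs n).2 G' →
      ∀ s : Finset (Fin m), G'.IsClique ↑s → s.card ≤ g r) ∧
    ∀ c : ℝ, ∃ n : ℕ, c < hallRatio (Gs n).2 := by
  constructor
  · -- nowhere dense part
    refine ⟨fun r => max 2 (F (6 * r + 4) ^ r * F (6 * r + 4) + 1), ?_⟩
    intro r n m G' hminor s hs
    by_cases hg : 6 * r + 3 < (Gs n).2.girth
    · refine le_trans ?_ (le_max_left _ _)
      by_contra h
      push_neg at h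
      obtain ⟨u, v, w, hu, hv, hw, huv, huw, hvw⟩ := Finset.two_lt_card_iff.mp (show 2 < s.card by omega)
      exact shallow_minor_no_triangle hminor hg (hs hu hv huv) (hs hv hw hvw) (hs hu hw huw)
    · push_neg at hg
      refine le_trans ?_ (le_max_right _ _)
      have hD : ∀ v, (((Gs n).2.neighborSet v).ncard : ℕ) < F (6 * r + 4) := by
        intro v
        exact lt_of_lt_of_le (hdeg n v) (hF (by omega))
      exact clique_bound_deg hminor hD s hs
  · -- unbounded Hall ratio part
    intro c
    obtain ⟨n, hn⟩ := halpha c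
    refine ⟨n, ?_⟩
    rcases lt_or_ge c 0 with hc | hc
    · refine lt_of_lt_of_le hc (Real.sSup_nonneg ?_)
      rintro x ⟨H, -, rfl⟩
      positivity
    · have hNpos : 0 < (Gs n).1 := by
        by_contra h
        push_neg at h
        have h0 : ((Gs n).1 : ℝ) = 0 := by
          have : (Gs n).1 = 0 := by omega
          exact_mod_cast this
        rw [h0, zero_div] at hn
        linarith
      haveI : Nonempty (Fin (Gs n).1) := Fin.pos_iff_nonempty.mp hNpos
      have hmem : ((Gs n).1 : ℝ) / (indepNum (Gs n).2 : ℝ) ∈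
          {x : ℝ | ∃ H : (Gs n).2.Subgraph, H.verts.Nonempty ∧
            x = (H.verts.ncard : ℝ) / (subIndepNum (Gs n).2 H : ℝ)} := by
        refine ⟨⊤, by simp [Set.univ_nonempty], ?_⟩
        rw [subIndepNum_top]
        congr 1
        simp [Set.ncard_univ]
      have hbdd : BddAbove {x : ℝ | ∃ H : (Gs n).2.Subgraph, H.verts.Nonempty ∧
          x = (H.verts.ncard : ℝ) / (subIndepNum (Gs n).2 H : ℝ)} := by
        refine ⟨((Gs n).1 : ℝ), ?_⟩
        rintro x ⟨H, -, rfl⟩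
        have hv : (H.verts.ncard : ℝ) ≤ ((Gs n).1 : ℝ) := by
          have : H.verts.ncard ≤ (Set.univ : Set (Fin (Gs n).1)).ncard :=
            Set.ncard_le_ncard (Set.subset_univ _) (Set.toFinite _)
          rw [Set.ncard_univ] at this
          simp only [Nat.card_eq_fintype_card, Fintype.card_fin] at this
          exact_mod_cast this
        rcases Nat.eq_zero_or_pos (subIndepNum (Gs n).2 H) with h0 | h1
        · rw [h0]
          simp only [Nat.cast_zero, div_zero]
          positivity
        · refine le_trans (div_le_self (by positivity) ?_) hv
          exact_mod_cast h1
      exact lt_of_lt_of_le hn (le_csSup hbdd hmem)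


end Paper
end
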